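/- The group G = ⟨ℓ, u | ℓ^N = 1, u³ = ℓ²⟩ with N even is non-abelian; its abelianization is cyclic of order 3N. In particular, when N = α₁α₂ + α₃ with α₁α₂α₃β₁β₂ odd, this group is not isomorphic to the cyclic group ℤ/3N. -/

import Mathlib

/-- Relations ℓ^N = 1, u³ = ℓ² on two generators (ℓ = generator 0, u = generator 1). -/
def cubicConicRels (N : ℕ) : Set (FreeGroup (Fin 2)) :=
  {FreeGroup.of 0 ^ N, FreeGroup.of 1 ^ 3 * (FreeGroup.of 0 ^ 2)⁻¹}

/-- The group G = ⟨ℓ, u | ℓ^N = 1, u³ = ℓ²⟩. -/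
def cubicConicGroup (N : ℕ) := PresentedGroup (cubicConicRels N)

instance (N : ℕ) : Group (cubicConicGroup N) := by
  unfold cubicConicGroup; infer_instance

private lemma rel_eq_one {α : Type*} {rels : Set (FreeGroup α)} {r : FreeGroup α}
    (h : r ∈ rels) : PresentedGroup.mk rels r = 1 :=
  (QuotientGroup.eq_one_iff r).mpr (Subgroup.subset_normalClosure h)

private lemma cubicConic_aux (N : ℕ) (hN : Even N) (hpos : 0 < N) :
    (¬ ∀ a b : PresentedGroup (cubicConicRels N), a * b = b * a) ∧
    IsCyclic (Abelianization (PresentedGroup (cubicConicRels N))) ∧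
    Nat.card (Abelianization (PresentedGroup (cubicConicRels N))) = 3 * N ∧
    IsEmpty (PresentedGroup (cubicConicRels N) ≃* Multiplicative (ZMod (3 * N))) := by
  have h3N : (3 * N : ℕ) ≠ 0 := by omega
  haveI : NeZero (3 * N) := ⟨h3N⟩
  -- relations in the presented group
  have h1 : (PresentedGroup.of 0 : PresentedGroup (cubicConicRels N)) ^ N = 1 := by
    show PresentedGroup.mk _ (FreeGroup.of 0) ^ N = 1
    rw [← map_pow]
    exact rel_eq_one (Set.mem_insert _ _)
  have h2 : (PresentedGroup.of 1 : PresentedGroup (cubicConicRels N)) ^ 3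
      = (PresentedGroup.of 0 : PresentedGroup (cubicConicRels N)) ^ 2 := by
    have h := rel_eq_one (rels := cubicConicRels N)
      (Set.mem_insert_of_mem _ (Set.mem_singleton (FreeGroup.of 1 ^ 3 * (FreeGroup.of 0 ^ 2)⁻¹)))
    rw [map_mul, map_inv, map_pow, map_pow] at h
    have h' := mul_eq_one_iff_eq_inv.mp h
    rw [inv_inv] at h'
    exact h'
  -- Part 1: non-abelian, via the quotient S₃.
  have hrels3 : ∀ r ∈ cubicConicRels N,
      FreeGroup.lift (![Equiv.swap 0 1, finRotate 3] : Fin 2 → Equiv.Perm (Fin 3)) r = 1 := by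
    rintro r (rfl | rfl)
    · rw [map_pow, FreeGroup.lift_apply_of]
      obtain ⟨k, hk⟩ := hN
      have hsq : (![Equiv.swap 0 1, finRotate 3] : Fin 2 → Equiv.Perm (Fin 3)) 0 ^ 2 = 1 := by
        decide
      rw [hk, ← two_mul, pow_mul, hsq, one_pow]
    · simp only [map_mul, map_inv, map_pow, FreeGroup.lift_apply_of]
      decide
  have hnonab : ¬ ∀ a b : PresentedGroup (cubicConicRels N), a * b = b * a := by
    intro hab
    have key := congrArg (PresentedGroup.toGroup hrels3)
      (hab (PresentedGroup.of 0) (PresentedGroup.of 1))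
    rw [map_mul, map_mul, PresentedGroup.toGroup.of, PresentedGroup.toGroup.of] at key
    revert key; decide
  -- Abelianization setup
  set L : Abelianization (PresentedGroup (cubicConicRels N)) :=
    Abelianization.of (PresentedGroup.of 0) with hLdef
  set U : Abelianization (PresentedGroup (cubicConicRels N)) :=
    Abelianization.of (PresentedGroup.of 1) with hUdef
  have hL : L ^ N = 1 := by rw [hLdef, ← map_pow, h1, map_one]
  have hU : U ^ 3 = L ^ 2 := by rw [hLdef, hUdef, ← map_pow, ← map_pow, h2]
  set g : Abelianization (PresentedGroup (cubicConicRels N)) := U ^ 2 * L⁻¹ with hgdef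
  have hg3 : g ^ 3 = L := by
    rw [hgdef, mul_pow, inv_pow, ← pow_mul, show 2 * 3 = 3 * 2 from rfl, pow_mul, hU,
      ← pow_mul]
    group
  have hg2 : g ^ 2 = U := by
    rw [hgdef, mul_pow, inv_pow, ← pow_mul, show 2 * 2 = 3 + 1 from rfl, pow_succ, hU,
      mul_comm (L ^ 2) U]
    group
  -- every element is a power of g
  have hgen : ∀ x : Abelianization (PresentedGroup (cubicConicRels N)),
      x ∈ Subgroup.zpowers g := by
    intro x
    obtain ⟨y, rfl⟩ :=
      (QuotientGroup.mk_surjective (s := commutator (PresentedGroup (cubicConicRels N)))) x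
    have hy : y ∈ (Subgroup.zpowers g).comap
        (Abelianization.of (G := PresentedGroup (cubicConicRels N))) := by
      refine PresentedGroup.generated_by _ _ (fun j => ?_) y
      fin_cases j
      · refine Subgroup.mem_comap.mpr ?_
        show L ∈ Subgroup.zpowers g
        exact hg3 ▸ Subgroup.pow_mem _ (Subgroup.mem_zpowers g) 3
      · refine Subgroup.mem_comap.mpr ?_
        show U ∈ Subgroup.zpowers g
        exact hg2 ▸ Subgroup.pow_mem _ (Subgroup.mem_zpowers g) 2
    exact Subgroup.mem_comap.mp hy
  have htop : Subgroup.zpowers g = ⊤ := (Subgroup.eq_top_iff' _).mpr hgen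
  -- homomorphism to ZMod (3N)
  have hrelsZ : ∀ r ∈ cubicConicRels N,
      FreeGroup.lift (![Multiplicative.ofAdd (3 : ZMod (3 * N)),
        Multiplicative.ofAdd (2 : ZMod (3 * N))]) r = 1 := by
    rintro r (rfl | rfl)
    · rw [map_pow, FreeGroup.lift_apply_of]
      show Multiplicative.ofAdd (3 : ZMod (3 * N)) ^ N = 1
      rw [← ofAdd_nsmul, nsmul_eq_mul]
      have hz := ZMod.natCast_self (3 * N)
      push_cast at hz
      have : ((N : ZMod (3 * N)) * 3 : ZMod (3 * N)) = 0 := by linear_combination hz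
      rw [this]
      rfl
    · simp only [map_mul, map_inv, map_pow, FreeGroup.lift_apply_of]
      show Multiplicative.ofAdd (2 : ZMod (3 * N)) ^ 3 *
        (Multiplicative.ofAdd (3 : ZMod (3 * N)) ^ 2)⁻¹ = 1
      rw [← ofAdd_nsmul, ← ofAdd_nsmul, ← ofAdd_neg, ← ofAdd_add]
      have : (3 : ℕ) • (2 : ZMod (3 * N)) + -((2 : ℕ) • (3 : ZMod (3 * N))) = 0 := by
        simp [nsmul_eq_mul]; ring
      rw [this]; rfl
  set φ' : Abelianization (PresentedGroup (cubicConicRels N)) →* Multiplicative (ZMod (3 * N)) :=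
    Abelianization.lift (PresentedGroup.toGroup hrelsZ) with hφ'def
  have hφ'L : φ' L = Multiplicative.ofAdd (3 : ZMod (3 * N)) := by
    rw [hLdef, hφ'def, Abelianization.lift_apply_of, PresentedGroup.toGroup.of]
    rfl
  have hφ'U : φ' U = Multiplicative.ofAdd (2 : ZMod (3 * N)) := by
    rw [hUdef, hφ'def, Abelianization.lift_apply_of, PresentedGroup.toGroup.of]
    rfl
  have hφ'g : φ' g = Multiplicative.ofAdd (1 : ZMod (3 * N)) := by
    rw [hgdef, map_mul, map_pow, map_inv, hφ'L, hφ'U, ← ofAdd_nsmul, ← ofAdd_neg, ← ofAdd_add]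
    congr 1
    simp [nsmul_eq_mul]
    ring
  -- order of g is 3N
  have hord : orderOf g = 3 * N := by
    refine Nat.dvd_antisymm ?_ ?_
    · apply orderOf_dvd_of_pow_eq_one
      rw [pow_mul, hg3, hL]
    · have hdvd := orderOf_map_dvd φ' g
      rw [hφ'g, orderOf_ofAdd_eq_addOrderOf, ZMod.addOrderOf_one] at hdvd
      exact hdvd
  have hcard : Nat.card (Abelianization (PresentedGroup (cubicConicRels N))) = 3 * N := by
    rw [← Subgroup.card_top, ← htop, Nat.card_zpowers, hord]
  refine ⟨hnonab, ⟨⟨g, hgen⟩⟩, hcard, ⟨fun e => ?_⟩⟩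
  exact hnonab fun a b => e.injective (by rw [map_mul, map_mul]; exact mul_comm _ _)

/-- The group G = ⟨ℓ, u | ℓ^N = 1, u³ = ℓ²⟩ with N even is non-abelian; its abelianization
is cyclic of order 3N; in particular G is not isomorphic to the cyclic group ℤ/3N. -/
theorem cubicConicGroup_not_abelian (N : ℕ) (hN : Even N) (hpos : 0 < N) :
    (¬ ∀ a b : cubicConicGroup N, a * b = b * a) ∧
    IsCyclic (Abelianization (cubicConicGroup N)) ∧
    Nat.card (Abelianization (cubicConicGroup N)) = 3 * N ∧
    IsEmpty (cubicConicGroup N ≃* Multiplicative (ZMod (3 * N))) := by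
  exact cubicConic_aux N hN hpos
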